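/- arXiv:2510.18529 — 2 statements merged into one kernel-verified Lean document; each statement's English description precedes it below -/
import Mathlib

section
/- Let n ≥ 4 and let π ∈ S(ℤ_n). If t([π]) = n − 2, then π is a strong complete mapping, i.e., both x ↦ π(x) − x and x ↦ π(x) + x are permutations of ℤ_n. -/
/-- `cyc σ` is the number of cycles in the cycle decomposition of the permutation `σ`,
counting fixed points as cycles; i.e., the number of orbits of `σ`. -/
noncomputable def cyc {α : Type*} (σ : Equiv.Perm α) : ℕ :=
  Nat.card (Quotient (Setoid.mk σ.SameCycle
    ⟨fun x => Equiv.Perm.SameCycle.refl σ x, fun h => h.symm, fun h h' => h.trans h'⟩))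

/-- `t(π) = n - cyc(π)`, the minimum number of transpositions whose product is `π`. -/
noncomputable def tPerm {n : ℕ} (π : Equiv.Perm (ZMod n)) : ℕ := n - cyc π

/-- `t([π])`, the minimum of `t(π ∘ c^k)` over `k ∈ ℤ_n`, where `c : x ↦ x + 1`. -/
noncomputable def tCoset {n : ℕ} (π : Equiv.Perm (ZMod n)) : ℕ :=
  sInf { m : ℕ | ∃ k : ZMod n, m = tPerm (π * Equiv.addRight k) }

/-- The circular sorting number `t(n)`, the maximum of `t([π])` over `π ∈ S(ℤ_n)`. -/
noncomputable def tCirc (n : ℕ) : ℕ :=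
  sSup { m : ℕ | ∃ π : Equiv.Perm (ZMod n), m = tCoset π }

lemma cyc_le_natCard {α : Type*} [Finite α] (σ : Equiv.Perm α) : cyc σ ≤ Nat.card α := by
  unfold cyc
  exact Nat.card_le_card_of_surjective _ Quotient.mk''_surjective

lemma three_le_cyc {α : Type*} [Finite α] (σ : Equiv.Perm α) (a b c : α)
    (hab : ¬σ.SameCycle a b) (hac : ¬σ.SameCycle a c) (hbc : ¬σ.SameCycle b c) :
    3 ≤ cyc σ := by
  unfold cyc
  set st : Setoid α := Setoid.mk σ.SameCycle
    ⟨fun x => Equiv.Perm.SameCycle.refl σ x, fun h => h.symm, fun h h' => h.trans h'⟩ with hst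
  have hinj : Function.Injective (fun i : Fin 3 =>
      (Quotient.mk st (![a, b, c] i) : Quotient st)) := by
    intro i j h
    fin_cases i <;> fin_cases j <;>
      simp only [Matrix.cons_val_zero, Matrix.cons_val_one, Matrix.head_cons,
        Matrix.cons_val_fin_one, Fin.mk_zero, Fin.mk_one] at h ⊢ <;>
      first
      | rfl
      | exact absurd (Quotient.exact h) hab
      | exact absurd (Quotient.exact h) hac
      | exact absurd (Quotient.exact h) hbc
      | exact absurd (Equiv.Perm.SameCycle.symm (Quotient.exact h)) hab
      | exact absurd (Equiv.Perm.SameCycle.symm (Quotient.exact h)) hac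
      | exact absurd (Equiv.Perm.SameCycle.symm (Quotient.exact h)) hbc
  calc 3 = Nat.card (Fin 3) := by simp
    _ ≤ Nat.card (Quotient st) := Nat.card_le_card_of_injective _ hinj

lemma fixed_not_sameCycle {α : Type*} (σ : Equiv.Perm α) {a z : α}
    (h : σ a = a) (hz : a ≠ z) : ¬σ.SameCycle a z := by
  rintro ⟨m, hm⟩
  rw [Equiv.Perm.zpow_apply_eq_self_of_apply_eq_self h m] at hm
  exact hz hm

lemma orbit_two {α : Type*} (σ : Equiv.Perm α) {a b : α}
    (hab : σ a = b) (hba : σ b = a) (m : ℤ) : (σ ^ m) a = a ∨ (σ ^ m) a = b := by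
  have key : ∀ x : α, σ x = x → False ∨ True := fun _ _ => Or.inr trivial
  have h2 : ∀ x : α, (σ ^ (2:ℤ)) x = x → ∀ q : ℤ, (σ ^ (2 * q)) x = x := by
    intro x hx q
    rw [zpow_mul]
    exact Equiv.Perm.zpow_apply_eq_self_of_apply_eq_self hx q
  have h2a : (σ ^ (2:ℤ)) a = a := by
    show (σ ^ (2:ℤ)) a = a
    rw [zpow_two, Equiv.Perm.mul_apply, hab, hba]
  have h2b : (σ ^ (2:ℤ)) b = b := by
    rw [zpow_two, Equiv.Perm.mul_apply, hba, hab]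
  obtain ⟨q, r, hr, hm⟩ : ∃ q r : ℤ, (r = 0 ∨ r = 1) ∧ m = 2 * q + r :=
    ⟨m / 2, m % 2, by omega, by omega⟩
  subst hm
  rw [zpow_add]
  rcases hr with hr | hr <;> subst hr
  · left
    simpa using h2 a h2a q
  · right
    have : (σ ^ (1:ℤ)) a = b := by simpa using hab
    rw [Equiv.Perm.mul_apply, this]
    exact h2 b h2b q

theorem strongCompleteMapping_of_tCoset_eq (n : ℕ) (hn : 4 ≤ n) (π : Equiv.Perm (ZMod n))
    (ht : tCoset π = n - 2) :
    Function.Bijective (fun x : ZMod n => π x - x) ∧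
      Function.Bijective (fun x : ZMod n => π x + x) := by
  haveI : NeZero n := ⟨by omega⟩
  have hcyc : ∀ k : ZMod n, cyc (π * Equiv.addRight k) ≤ 2 := by
    intro k
    have hmem : tPerm (π * Equiv.addRight k) ∈
        { m : ℕ | ∃ k : ZMod n, m = tPerm (π * Equiv.addRight k) } := ⟨k, rfl⟩
    have hle : n - 2 ≤ tPerm (π * Equiv.addRight k) := by
      rw [← ht]; exact Nat.sInf_le hmem
    have hc : cyc (π * Equiv.addRight k) ≤ n := by
      simpa [Nat.card_zmod] using cyc_le_natCard (π * Equiv.addRight k)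
    unfold tPerm at hle
    omega
  have happ : ∀ (k : ZMod n) (x : ZMod n), (π * Equiv.addRight k) x = π (x + k) := by
    intro k x; rfl
  have hexists : ∀ a b c : ZMod n, ∃ z : ZMod n, z ≠ a ∧ z ≠ b ∧ z ≠ c := by
    intro a b c
    by_contra hcon
    push_neg at hcon
    have hsub : (Finset.univ : Finset (ZMod n)) ⊆ {a, b, c} := by
      intro z _
      rcases eq_or_ne z a with h | h; · simp [h]
      rcases eq_or_ne z b with h' | h'; · simp [h']
      have := hcon z h h'
      simp [this]
    have h1 := Finset.card_le_card hsub
    have h2 : ({a, b, c} : Finset (ZMod n)).card ≤ 3 := by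
      apply le_trans (Finset.card_insert_le _ _)
      have := le_trans (Finset.card_insert_le b ({c} : Finset (ZMod n)))
        (by simp : ({c} : Finset (ZMod n)).card + 1 ≤ 2)
      omega
    rw [Finset.card_univ, ZMod.card] at h1
    omega
  -- Part 1: minus map injective
  have hminus_inj : Function.Injective (fun x : ZMod n => π x - x) := by
    intro x y hxy
    simp only at hxy
    by_contra hne
    set k : ZMod n := x - π x with hk
    set σ := π * Equiv.addRight k with hσ
    have hfx : σ (π x) = π x := by
      rw [happ]
      congr 1; ring
    have hfy : σ (π y) = π y := by
      rw [happ]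
      have : π y + k = y := by rw [hk]; linear_combination -hxy
      rw [this]
    have hpne : π x ≠ π y := fun h => hne (π.injective h)
    obtain ⟨z, hz1, hz2, _⟩ := hexists (π x) (π y) (π y)
    have h3 : 3 ≤ cyc σ :=
      three_le_cyc σ (π x) (π y) z
        (fixed_not_sameCycle σ hfx hpne)
        (fixed_not_sameCycle σ hfx hz1.symm)
        (fixed_not_sameCycle σ hfy hz2.symm)
    have h2 := hcyc k
    rw [← hσ] at h2
    omega
  have hminus : Function.Bijective (fun x : ZMod n => π x - x) :=
    Finite.injective_iff_bijective.mp hminus_inj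
  refine ⟨hminus, ?_⟩
  -- Part 2: plus map injective
  have hplus_inj : Function.Injective (fun x : ZMod n => π x + x) := by
    intro x y hxy
    simp only at hxy
    by_contra hne
    set k : ZMod n := x - π y with hk
    set σ := π * Equiv.addRight k with hσ
    set a := π y with ha
    set b := π x with hb
    have hab : σ a = b := by
      rw [happ]
      congr 1; rw [ha, hk]; ring
    have hba : σ b = a := by
      rw [happ]
      have : b + k = y := by rw [hb, hk]; linear_combination hxy
      rw [this]
    have hane : a ≠ b := fun h => hne (π.injective h).symm
    -- fixed point of σ
    obtain ⟨p0, hp0⟩ := hminus.2 (-k)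
    simp only at hp0
    set p := p0 - k with hp
    have hfp : σ p = p := by
      rw [happ]
      have h1 : p + k = p0 := by rw [hp]; ring
      rw [h1]
      have : π p0 = p0 - k := by linear_combination hp0
      rw [this]
    have hpa : p ≠ a := by
      intro h
      rw [← h, hfp] at hab
      exact hane (by rw [← h]; exact hab)
    obtain ⟨z, hz1, hz2, hz3⟩ := hexists p a b
    have h3 : 3 ≤ cyc σ := by
      apply three_le_cyc σ p a z
      · exact fixed_not_sameCycle σ hfp hpa
      · exact fixed_not_sameCycle σ hfp hz1.symm
      · rintro ⟨m, hm⟩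
        rcases orbit_two σ hab hba m with h | h
        · rw [hm] at h; exact hz2 h
        · rw [hm] at h; exact hz3 h
    have h2 := hcyc k
    rw [← hσ] at h2
    omega
  exact Finite.injective_iff_bijective.mp hplus_inj
end

section
/- Let p, q ≥ 3 be prime numbers and let e_x ∈ ℤ for each x ∈ ℤ_p, with e := Σ_{x ∈ ℤ_p} e_x. Then t(pq) ≥ pq − max over x ∈ ℤ_p of ( 2 + gcd(q−1, e_x) + gcd(q−1, e − e_x) ), where gcd(q−1, m) for an integer m denotes the (nonnegative) greatest common divisor of q−1 and m. -/
def scSetoid {α : Type*} (σ : Equiv.Perm α) : Setoid α :=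
  Setoid.mk σ.SameCycle
    ⟨fun x => Equiv.Perm.SameCycle.refl σ x, fun h => h.symm, fun h h' => h.trans h'⟩

lemma cyc_eq {α : Type*} (σ : Equiv.Perm α) : cyc σ = Nat.card (Quotient (scSetoid σ)) := rfl

lemma cyc_le_card_of_cover {α : Type*} [Finite α] (σ : Equiv.Perm α) (R : Finset α)
    (h : ∀ z, ∃ r ∈ R, σ.SameCycle r z) : cyc σ ≤ R.card := by
  rw [cyc_eq]
  have hsurj : Function.Surjective (fun r : R => (Quotient.mk (scSetoid σ) (r : α))) := by
    intro z
    induction z using Quotient.inductionOn with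
    | h z =>
      obtain ⟨r, hr, hrz⟩ := h z
      exact ⟨⟨r, hr⟩, Quotient.sound hrz⟩
  calc Nat.card (Quotient (scSetoid σ)) ≤ Nat.card R :=
        Nat.card_le_card_of_surjective _ hsurj
    _ = R.card := Nat.card_eq_finsetCard R

def permConjHom {α β : Type*} (f : α ≃ β) : Equiv.Perm α →* Equiv.Perm β where
  toFun σ := (f.symm.trans σ).trans f
  map_one' := by ext b; simp
  map_mul' σ τ := by ext b; simp [Equiv.Perm.mul_apply]

lemma permConjHom_apply {α β : Type*} (f : α ≃ β) (σ : Equiv.Perm α) (b : β) :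
    permConjHom f σ b = f (σ (f.symm b)) := rfl

lemma sameCycle_permConj {α β : Type*} (f : α ≃ β) (σ : Equiv.Perm α) (x y : α) :
    (permConjHom f σ).SameCycle (f x) (f y) ↔ σ.SameCycle x y := by
  constructor
  · rintro ⟨i, hi⟩
    refine ⟨i, ?_⟩
    rw [← map_zpow, permConjHom_apply, Equiv.symm_apply_apply] at hi
    exact f.injective hi
  · rintro ⟨i, hi⟩
    refine ⟨i, ?_⟩
    rw [← map_zpow, permConjHom_apply, Equiv.symm_apply_apply, hi]

lemma cyc_permConj {α β : Type*} (f : α ≃ β) (σ : Equiv.Perm α) :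
    cyc (permConjHom f σ) = cyc σ := by
  rw [cyc_eq, cyc_eq]
  exact (Nat.card_congr (Quotient.congr f (fun a b => (sameCycle_permConj f σ a b).symm))).symm

lemma semiconj_zpow_apply {β γ : Type*} (τ : Equiv.Perm γ) (ψ : Equiv.Perm β) (f : β → γ)
    (h : ∀ x, τ (f x) = f (ψ x)) : ∀ (i : ℤ) (x : β), (τ ^ i) (f x) = f ((ψ ^ i) x) := by
  have hn : ∀ (τ : Equiv.Perm γ) (ψ : Equiv.Perm β), (∀ x, τ (f x) = f (ψ x)) →
      ∀ (n : ℕ) (x : β), (τ ^ n) (f x) = f ((ψ ^ n) x) := by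
    intro τ ψ h n
    induction n with
    | zero => intro x; simp
    | succ n ih =>
      intro x
      rw [pow_succ, pow_succ, Equiv.Perm.mul_apply, Equiv.Perm.mul_apply, h, ih]
  have hinv : ∀ x, τ⁻¹ (f x) = f (ψ⁻¹ x) := by
    intro x
    have h2 := h (ψ⁻¹ x)
    rw [show ψ (ψ⁻¹ x) = x from ψ.apply_symm_apply x] at h2
    rw [← h2, show τ⁻¹ (τ (f (ψ⁻¹ x))) = f (ψ⁻¹ x) from τ.symm_apply_apply _]
  intro i x
  cases i with
  | ofNat n => simpa using hn τ ψ h n x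
  | negSucc n =>
    rw [zpow_negSucc, zpow_negSucc, ← inv_pow, ← inv_pow]
    exact hn τ⁻¹ ψ⁻¹ hinv (n + 1) x

lemma semiconj_proj_pow {γ β : Type*} (σ : Equiv.Perm γ) (b : Equiv.Perm β) (f : γ → β)
    (h : ∀ z, f (σ z) = b (f z)) : ∀ (n : ℕ) (z : γ), f ((σ ^ n) z) = (b ^ n) (f z) := by
  intro n
  induction n with
  | zero => intro z; simp
  | succ n ih =>
    intro z
    rw [pow_succ, pow_succ, Equiv.Perm.mul_apply, Equiv.Perm.mul_apply, ih, h]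

def mulPerm {q : ℕ} (μ : (ZMod q)ˣ) : Equiv.Perm (ZMod q) :=
  MulAction.toPermHom (ZMod q)ˣ (ZMod q) μ

lemma mulPerm_apply {q : ℕ} (μ : (ZMod q)ˣ) (b : ZMod q) : mulPerm μ b = (μ : ZMod q) * b :=
  rfl

lemma mulPerm_zpow {q : ℕ} (μ : (ZMod q)ˣ) (i : ℤ) : (mulPerm μ) ^ i = mulPerm (μ ^ i) :=
  (map_zpow (MulAction.toPermHom (ZMod q)ˣ (ZMod q)) μ i).symm

def affPerm {q : ℕ} (μ : (ZMod q)ˣ) (t : ZMod q) : Equiv.Perm (ZMod q) :=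
  mulPerm μ * Equiv.addRight t

lemma affPerm_apply {q : ℕ} (μ : (ZMod q)ˣ) (t b : ZMod q) :
    affPerm μ t b = (μ : ZMod q) * (b + t) := rfl

lemma affine_cover (q : ℕ) [Fact q.Prime] (ζ : (ZMod q)ˣ)
    (hζ : ∀ v : (ZMod q)ˣ, v ∈ Subgroup.zpowers ζ) (s : ℕ) (t : ZMod q) :
    ∃ R : Finset (ZMod q), R.card ≤ 1 + Nat.gcd (q - 1) s ∧
      ∀ b, ∃ r ∈ R, ∃ i : ℤ, ((affPerm (ζ ^ s) t) ^ i) r = b := by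
  have hq : q.Prime := Fact.out
  have hq2 := hq.two_le
  have hord : orderOf ζ = q - 1 := by
    rw [orderOf_eq_card_of_forall_mem_zpowers hζ, Nat.card_eq_fintype_card, ZMod.card_units q]
  have hcast : ((q - 1 : ℕ) : ℤ) = (q : ℤ) - 1 := by push_cast; omega
  by_cases hone : (ζ : (ZMod q)ˣ) ^ s = 1
  · have hdvd : (q - 1) ∣ s := by
      rw [← hord]; exact orderOf_dvd_of_pow_eq_one hone
    have hgcd : Nat.gcd (q - 1) s = q - 1 := Nat.gcd_eq_left hdvd
    refine ⟨Finset.univ, ?_, ?_⟩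
    · rw [hgcd, Finset.card_univ, ZMod.card q]; omega
    · intro b
      exact ⟨b, Finset.mem_univ b, 0, by simp⟩
  · set μ : (ZMod q) := ((ζ ^ s : (ZMod q)ˣ) : ZMod q) with hμdef
    have hμ1 : μ ≠ 1 := fun h => hone (Units.ext h)
    have h1μ : (1 : ZMod q) - μ ≠ 0 := sub_ne_zero.mpr (Ne.symm hμ1)
    set b₀ : ZMod q := ((1 : ZMod q) - μ)⁻¹ * (μ * t) with hb₀def
    have hb₀ : μ * b₀ + μ * t = b₀ := by
      have h2 : ((1 : ZMod q) - μ) * b₀ = μ * t := by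
        rw [hb₀def, ← mul_assoc, mul_inv_cancel₀ h1μ, one_mul]
      linear_combination -h2
    have key : ∀ w, affPerm (ζ ^ s) t (b₀ + w) = b₀ + mulPerm (ζ ^ s) w := by
      intro w
      rw [affPerm_apply, mulPerm_apply, ← hμdef]
      linear_combination hb₀
    have keyz : ∀ (i : ℤ) (w : ZMod q),
        ((affPerm (ζ ^ s) t) ^ i) (b₀ + w) = b₀ + (((ζ ^ s) ^ i : (ZMod q)ˣ) : ZMod q) * w := by
      intro i w
      have h3 := semiconj_zpow_apply (affPerm (ζ ^ s) t) (mulPerm (ζ ^ s))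
        (fun w => b₀ + w) key i w
      simp only [mulPerm_zpow, mulPerm_apply] at h3
      exact h3
    set d : ℕ := Nat.gcd (q - 1) s with hddef
    have hd0 : 0 < d := Nat.gcd_pos_of_pos_left s (by omega)
    refine ⟨insert b₀ ((Finset.range d).image fun j => b₀ + (ζ : ZMod q) ^ j), ?_, ?_⟩
    · calc (insert b₀ ((Finset.range d).image fun j => b₀ + (ζ : ZMod q) ^ j)).card
          ≤ ((Finset.range d).image fun j => b₀ + (ζ : ZMod q) ^ j).card + 1 :=
            Finset.card_insert_le _ _
        _ ≤ d + 1 := by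
            have := Finset.card_image_le (s := Finset.range d)
              (f := fun j => b₀ + (ζ : ZMod q) ^ j)
            simpa [Finset.card_range] using this
        _ = 1 + d := by omega
    · intro b
      by_cases hw : b - b₀ = 0
      · refine ⟨b₀, Finset.mem_insert_self _ _, 0, ?_⟩
        have : b = b₀ := by linear_combination hw
        simp [this]
      · obtain ⟨wu, hwu⟩ := (isUnit_iff_ne_zero.mpr hw)
        obtain ⟨iz, hiz⟩ := Subgroup.mem_zpowers_iff.mp (hζ wu)
        have hq1 : ((q : ℤ) - 1) ≠ 0 := by omega
        set m : ℕ := (iz % ((q : ℤ) - 1)).toNat with hmdef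
        have hmz : (m : ℤ) = iz % ((q : ℤ) - 1) := by
          rw [hmdef, Int.toNat_of_nonneg (Int.emod_nonneg iz hq1)]
        have hord1 : ζ ^ ((q : ℤ) - 1) = 1 := by
          rw [← hcast, zpow_natCast, ← hord, pow_orderOf_eq_one]
        have hζm : ζ ^ m = wu := by
          have h1 : ζ ^ (m : ℤ) = ζ ^ iz := by
            rw [hmz]
            have h2 : ((q : ℤ) - 1) = ((orderOf ζ : ℕ) : ℤ) := by rw [hord, hcast]
            rw [h2]
            exact zpow_mod_orderOf ζ iz
          rw [← zpow_natCast, h1, hiz]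
        set j : ℕ := m % d with hjdef
        have hjd : j < d := Nat.mod_lt m hd0
        refine ⟨b₀ + (ζ : ZMod q) ^ j, Finset.mem_insert_of_mem
          (Finset.mem_image.mpr ⟨j, Finset.mem_range.mpr hjd, rfl⟩), ?_⟩
        obtain ⟨c, hc⟩ : ∃ c : ℕ, m = j + d * c :=
          ⟨m / d, by rw [hjdef]; exact (Nat.mod_add_div m d).symm⟩
        set B : ℤ := Nat.gcdB (q - 1) s with hBdef
        set A : ℤ := Nat.gcdA (q - 1) s with hAdef
        have hbez : (d : ℤ) = ((q : ℤ) - 1) * A + (s : ℤ) * B := by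
          have h := Nat.gcd_eq_gcd_ab (q - 1) s
          rw [hcast] at h
          exact h
        have hzd : (ζ ^ s : (ZMod q)ˣ) ^ (B * (c : ℤ)) = ζ ^ ((d : ℤ) * c) := by
          rw [← zpow_natCast ζ s, ← zpow_mul]
          have hexp : (s : ℤ) * (B * c) = (d : ℤ) * c - ((q : ℤ) - 1) * (A * c) := by
            rw [hbez]; ring
          rw [hexp, zpow_sub, zpow_mul ζ ((q : ℤ) - 1), hord1, one_zpow, inv_one, mul_one]
        have huu : ((ζ ^ s : (ZMod q)ˣ) ^ (B * (c : ℤ))) * ζ ^ j = ζ ^ m := by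
          rw [hzd, ← zpow_natCast ζ j, ← zpow_add, ← zpow_natCast ζ m]
          congr 1
          rw [hc]; push_cast; ring
        refine ⟨B * (c : ℤ), ?_⟩
        rw [keyz]
        have hval : (((ζ ^ s : (ZMod q)ˣ) ^ (B * (c : ℤ)) : (ZMod q)ˣ) : ZMod q) *
            ((ζ : ZMod q) ^ j) = b - b₀ := by
          rw [← hwu, ← hζm, ← huu]
          push_cast
          ring
        rw [hval]
        ring

lemma zpowers_to_pow_lt {G : Type*} [Group G] (g x : G) (hg : 0 < orderOf g)
    (hx : ∃ i : ℤ, g ^ i = x) : ∃ m : ℕ, m < orderOf g ∧ g ^ m = x := by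
  obtain ⟨i, hi⟩ := hx
  have h1 : 0 ≤ i % (orderOf g : ℤ) := Int.emod_nonneg i (by exact_mod_cast hg.ne')
  have h2 : i % (orderOf g : ℤ) < (orderOf g : ℤ) := Int.emod_lt_of_pos i (by exact_mod_cast hg)
  refine ⟨(i % (orderOf g : ℤ)).toNat, by omega, ?_⟩
  rw [← zpow_natCast, Int.toNat_of_nonneg h1, zpow_mod_orderOf, hi]

-- conjugation structure of an affine permutation around its fixed point
lemma affPerm_conj {q : ℕ} [Fact q.Prime] (μ : (ZMod q)ˣ) (hμ : (μ : ZMod q) ≠ 1)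
    (t : ZMod q) (w : ZMod q) :
    affPerm μ t (((1 : ZMod q) - μ)⁻¹ * (μ * t) + w)
      = ((1 : ZMod q) - μ)⁻¹ * (μ * t) + (μ : ZMod q) * w := by
  have h1μ : (1 : ZMod q) - (μ : ZMod q) ≠ 0 := sub_ne_zero.mpr (Ne.symm hμ)
  have h2 : ((1 : ZMod q) - (μ : ZMod q)) * (((1 : ZMod q) - μ)⁻¹ * (μ * t)) = (μ : ZMod q) * t := by
    rw [← mul_assoc, mul_inv_cancel₀ h1μ, one_mul]
  rw [affPerm_apply]
  linear_combination -h2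

def skewPerm {p q : ℕ} (h : (ZMod p)ˣ) (u : ZMod p → (ZMod q)ˣ) :
    Equiv.Perm (ZMod p × ZMod q) :=
  Equiv.prodShear (mulPerm h) (fun a => mulPerm (u a))

lemma skewPerm_apply {p q : ℕ} (h : (ZMod p)ˣ) (u : ZMod p → (ZMod q)ˣ)
    (z : ZMod p × ZMod q) :
    skewPerm h u z = ((h : ZMod p) * z.1, (u z.1 : ZMod q) * z.2) := rfl

section Skew

variable {p q : ℕ} [Fact p.Prime] [Fact q.Prime]

lemma skew_sigma_apply (h : (ZMod p)ˣ) (u : ZMod p → (ZMod q)ˣ) (k₁ : ZMod p) (k₂ : ZMod q)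
    (z : ZMod p × ZMod q) :
    (skewPerm h u * Equiv.addRight ((k₁, k₂) : ZMod p × ZMod q)) z
      = ((h : ZMod p) * (z.1 + k₁), (u (z.1 + k₁) : ZMod q) * (z.2 + k₂)) := rfl

lemma skew_proj (h : (ZMod p)ˣ) (u : ZMod p → (ZMod q)ˣ) (k₁ : ZMod p) (k₂ : ZMod q)
    (z : ZMod p × ZMod q) :
    ((skewPerm h u * Equiv.addRight ((k₁, k₂) : ZMod p × ZMod q)) z).1
      = affPerm h k₁ z.1 := rfl

lemma skew_pow_snd (h : (ZMod p)ˣ) (u : ZMod p → (ZMod q)ˣ) (k₁ : ZMod p) (k₂ : ZMod q)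
    (m : ℕ) (a : ZMod p) :
    ∃ C : ZMod q, ∀ b : ZMod q,
      ((skewPerm h u * Equiv.addRight ((k₁, k₂) : ZMod p × ZMod q)) ^ m) (a, b)
        = (((affPerm h k₁) ^ m) a,
            ((∏ j ∈ Finset.range m, u (((affPerm h k₁) ^ j) a + k₁) : (ZMod q)ˣ) : ZMod q) * b
              + C) := by
  induction m with
  | zero => exact ⟨0, fun b => by simp⟩
  | succ m ih =>
    obtain ⟨C, hC⟩ := ih
    refine ⟨(u (((affPerm h k₁) ^ m) a + k₁) : ZMod q) * (C + k₂), fun b => ?_⟩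
    have h1 : ((skewPerm h u * Equiv.addRight ((k₁, k₂) : ZMod p × ZMod q)) ^ (m + 1)) (a, b)
        = (skewPerm h u * Equiv.addRight ((k₁, k₂) : ZMod p × ZMod q))
            (((skewPerm h u * Equiv.addRight ((k₁, k₂) : ZMod p × ZMod q)) ^ m) (a, b)) := by
      rw [pow_succ', Equiv.Perm.mul_apply]
    rw [h1, hC b, skew_sigma_apply]
    simp only [Prod.mk.injEq]
    constructor
    · rw [pow_succ', Equiv.Perm.mul_apply]; rfl
    · rw [Finset.prod_range_succ, Units.val_mul]; ring

lemma skew_cyc_le (hp3 : 3 ≤ p) (h : (ZMod p)ˣ) (hh : ∀ v : (ZMod p)ˣ, v ∈ Subgroup.zpowers h)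
    (ζ : (ZMod q)ˣ) (hζ : ∀ v : (ZMod q)ˣ, v ∈ Subgroup.zpowers ζ)
    (n : ZMod p → ℕ) (k₁ : ZMod p) (k₂ : ZMod q) :
    ∃ x : ZMod p,
      cyc (skewPerm h (fun y => ζ ^ n y) * Equiv.addRight ((k₁, k₂) : ZMod p × ZMod q))
        ≤ 2 + Nat.gcd (q - 1) (n x) + Nat.gcd (q - 1) (∑ y ∈ Finset.univ.erase x, n y) := by
  have hp : p.Prime := Fact.out
  have hp2 := hp.two_le
  set u : ZMod p → (ZMod q)ˣ := fun y => ζ ^ n y with hu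
  set σ := skewPerm h u * Equiv.addRight ((k₁, k₂) : ZMod p × ZMod q) with hσ
  set β := affPerm h k₁ with hβ
  have hordh : orderOf h = p - 1 := by
    rw [orderOf_eq_card_of_forall_mem_zpowers hh, Nat.card_eq_fintype_card, ZMod.card_units p]
  have hordh_pos : 0 < orderOf h := by omega
  have hh1 : (h : ZMod p) ≠ 1 := by
    intro hc
    have : h = 1 := Units.ext hc
    rw [this, orderOf_one] at hordh
    omega
  set aS : ZMod p := ((1 : ZMod p) - (h : ZMod p))⁻¹ * ((h : ZMod p) * k₁) with haS
  set x : ZMod p := aS + k₁ with hx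
  set a₀ : ZMod p := aS + 1 with ha₀
  have hβconj : ∀ w, β (aS + w) = aS + (h : ZMod p) * w := fun w => affPerm_conj h hh1 k₁ w
  have hβpow : ∀ (m : ℕ) (w : ZMod p), (β ^ m) (aS + w) = aS + ((h ^ m : (ZMod p)ˣ) : ZMod p) * w := by
    intro m w
    have h0 : ∀ w : ZMod p, β ((fun w => aS + w) w) = (fun w => aS + w) (mulPerm h w) := by
      intro w; simpa [mulPerm_apply] using hβconj w
    have h2 := semiconj_zpow_apply β (mulPerm h) (fun w => aS + w) h0 (m : ℤ) w
    rw [mulPerm_zpow, zpow_natCast, zpow_natCast] at h2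
    rw [h2, mulPerm_apply]
  have hβa₀ : ∀ (m : ℕ), (β ^ m) a₀ = aS + ((h ^ m : (ZMod p)ˣ) : ZMod p) := by
    intro m; rw [ha₀, hβpow m 1, mul_one]
  have hβfix : β aS = aS := by
    have := hβconj 0
    simpa using this
  -- the invariant fibre
  have hfib : ∀ b, σ (aS, b) = (aS, affPerm (ζ ^ n x) k₂ b) := by
    intro b
    rw [hσ, skew_sigma_apply]
    refine Prod.ext ?_ ?_
    · show (h : ZMod p) * (aS + k₁) = aS
      rw [← affPerm_apply h k₁ aS, ← hβ, hβfix]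
    · show (u (aS + k₁) : ZMod q) * (b + k₂) = _
      rw [affPerm_apply, ← hx]
  obtain ⟨R₁, hR₁card, hR₁cov⟩ := affine_cover q ζ hζ (n x) k₂
  -- the return map on the fibre over a₀
  obtain ⟨C, hC⟩ := skew_pow_snd h u k₁ k₂ (p - 1) a₀
  have hβp1 : (β ^ (p - 1)) a₀ = a₀ := by
    rw [hβa₀, ← hordh, pow_orderOf_eq_one, Units.val_one, ha₀]
  set N : ℕ := ∑ j ∈ Finset.range (p - 1), n ((β ^ j) a₀ + k₁) with hN
  have hM : ((∏ j ∈ Finset.range (p - 1), u ((β ^ j) a₀ + k₁)) : (ZMod q)ˣ) = ζ ^ N := by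
    rw [hN, hu]
    exact Finset.prod_pow_eq_pow_sum _ _ _
  set t₂ : ZMod q := (((ζ ^ N : (ZMod q)ˣ)⁻¹ : (ZMod q)ˣ) : ZMod q) * C with ht₂
  have hret : ∀ b, (σ ^ (p - 1)) (a₀, b) = (a₀, affPerm (ζ ^ N) t₂ b) := by
    intro b
    rw [← hσ] at hC
    rw [hC b, hβp1, hM]
    refine Prod.ext rfl ?_
    show ((ζ ^ N : (ZMod q)ˣ) : ZMod q) * b + C = affPerm (ζ ^ N) t₂ b
    rw [affPerm_apply, ht₂, mul_add, ← mul_assoc, ← Units.val_mul, mul_inv_cancel,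
      Units.val_one, one_mul]
  obtain ⟨R₂, hR₂card, hR₂cov⟩ := affine_cover q ζ hζ N t₂
  -- reindex the exponent sum
  have hNsum : N = ∑ y ∈ Finset.univ.erase x, n y := by
    have hstep : ∀ j, (β ^ j) a₀ + k₁ = x + ((h ^ j : (ZMod p)ˣ) : ZMod p) := by
      intro j; rw [hβa₀, hx]; ring
    rw [hN]
    simp only [hstep]
    refine Finset.sum_bij (fun j _ => x + ((h ^ j : (ZMod p)ˣ) : ZMod p)) ?_ ?_ ?_ ?_
    · intro j hj
      refine Finset.mem_erase.mpr ⟨?_, Finset.mem_univ _⟩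
      intro hc
      have : ((h ^ j : (ZMod p)ˣ) : ZMod p) = 0 := by
        have := hc
        nth_rewrite 2 [← add_zero x] at this
        exact add_left_cancel this
      exact Units.ne_zero _ this
    · intro j hj j' hj' hjj
      have h5 : ((h ^ j : (ZMod p)ˣ) : ZMod p) = ((h ^ j' : (ZMod p)ˣ) : ZMod p) :=
        add_left_cancel hjj
      have h6 : (h : (ZMod p)ˣ) ^ j = h ^ j' := Units.ext h5
      have hj1 : j ∈ Set.Iio (orderOf h) := by
        simp only [Set.mem_Iio, hordh]; exact Finset.mem_range.mp hj
      have hj2 : j' ∈ Set.Iio (orderOf h) := by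
        simp only [Set.mem_Iio, hordh]; exact Finset.mem_range.mp hj'
      exact pow_injOn_Iio_orderOf hj1 hj2 h6
    · intro y hy
      have hyx : y - x ≠ 0 := sub_ne_zero.mpr (Finset.mem_erase.mp hy).1
      obtain ⟨vu, hvu⟩ := isUnit_iff_ne_zero.mpr hyx
      obtain ⟨m, hm, hhm⟩ := zpowers_to_pow_lt h vu hordh_pos
        (Subgroup.mem_zpowers_iff.mp (hh vu))
      refine ⟨m, Finset.mem_range.mpr (by omega), ?_⟩
      show x + ((h ^ m : (ZMod p)ˣ) : ZMod p) = y
      rw [hhm, hvu]; ring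
    · intro j hj; rfl
  -- the covering set
  set Rtot : Finset (ZMod p × ZMod q) :=
    R₁.image (fun b => ((aS, b) : ZMod p × ZMod q)) ∪
      R₂.image (fun b => ((a₀, b) : ZMod p × ZMod q)) with hRtot
  have hproj : ∀ w : ZMod p × ZMod q, (σ w).1 = β w.1 := fun w => rfl
  have hcov : ∀ z, ∃ r ∈ Rtot, σ.SameCycle r z := by
    rintro ⟨a, b⟩
    by_cases ha : a = aS
    · obtain ⟨r, hr, i, hir⟩ := hR₁cov b
      refine ⟨(aS, r), Finset.mem_union_left _ (Finset.mem_image_of_mem _ hr), i, ?_⟩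
      have h7 := semiconj_zpow_apply σ (affPerm (ζ ^ n x) k₂) (fun b => ((aS, b) : ZMod p × ZMod q))
        hfib i r
      rw [h7, hir, ha]
    · have hva : a - aS ≠ 0 := sub_ne_zero.mpr ha
      obtain ⟨vu, hvu⟩ := isUnit_iff_ne_zero.mpr hva
      obtain ⟨m, hm, hhm⟩ := zpowers_to_pow_lt h vu hordh_pos
        (Subgroup.mem_zpowers_iff.mp (hh vu))
      have hβm : (β ^ m) a₀ = a := by rw [hβa₀, hhm, hvu]; ring
      set z' := ((σ ^ m)⁻¹) ((a, b) : ZMod p × ZMod q) with hz'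
      have hz1 : (σ ^ m) z' = (a, b) := by rw [hz']; exact Equiv.apply_symm_apply _ _
      have hz2 : (β ^ m) z'.1 = a := by
        rw [← semiconj_proj_pow σ β Prod.fst hproj m z', hz1]
      have hz3 : z'.1 = a₀ := (β ^ m).injective (by rw [hz2, hβm])
      obtain ⟨r, hr, i, hir⟩ := hR₂cov z'.2
      have hsc1 : σ.SameCycle (a₀, r) z' := by
        refine ⟨((p - 1 : ℕ) : ℤ) * i, ?_⟩
        have h4 : σ ^ (((p - 1 : ℕ) : ℤ) * i) = (σ ^ (p - 1)) ^ i := by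
          rw [zpow_mul, zpow_natCast]
        rw [h4]
        have h8 := semiconj_zpow_apply (σ ^ (p - 1)) (affPerm (ζ ^ N) t₂)
          (fun b => ((a₀, b) : ZMod p × ZMod q)) hret i r
        rw [h8, hir]
        rw [← hz3]
      have hsc2 : σ.SameCycle z' (a, b) := ⟨(m : ℤ), by rw [zpow_natCast, hz1]⟩
      exact ⟨(a₀, r), Finset.mem_union_right _ (Finset.mem_image_of_mem _ hr),
        hsc1.trans hsc2⟩
  refine ⟨x, ?_⟩
  calc cyc σ ≤ Rtot.card := cyc_le_card_of_cover σ Rtot hcov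
    _ ≤ (R₁.image (fun b => ((aS, b) : ZMod p × ZMod q))).card +
          (R₂.image (fun b => ((a₀, b) : ZMod p × ZMod q))).card := Finset.card_union_le _ _
    _ ≤ R₁.card + R₂.card := add_le_add (Finset.card_image_le) (Finset.card_image_le)
    _ ≤ (1 + Nat.gcd (q - 1) (n x)) + (1 + Nat.gcd (q - 1) N) := add_le_add hR₁card hR₂card
    _ = 2 + Nat.gcd (q - 1) (n x) + Nat.gcd (q - 1) (∑ y ∈ Finset.univ.erase x, n y) := by
        rw [← hNsum]; ring

end Skew

lemma int_gcd_congr (a : ℤ) {x y : ℤ} (h : a ∣ (x - y)) :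
    Int.gcd a x = Int.gcd a y := by
  have hxy : ∀ {u v : ℤ}, a ∣ (u - v) → (Int.gcd a u : ℤ) ∣ (Int.gcd a v : ℤ) := by
    intro u v huv
    refine Int.dvd_coe_gcd (Int.gcd_dvd_left _ _) ?_
    have h1 : v = u - (u - v) := by ring
    rw [h1]
    exact dvd_sub (Int.gcd_dvd_right _ _) ((Int.gcd_dvd_left _ _).trans huv)
  have h2 : a ∣ (y - x) := by
    have : y - x = -(x - y) := by ring
    rw [this]; exact dvd_neg.mpr h
  exact Nat.dvd_antisymm (Int.natCast_dvd_natCast.mp (hxy h))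
    (Int.natCast_dvd_natCast.mp (hxy h2))

lemma gcd_toNat_mod (q : ℕ) (hq : 2 ≤ q) (z : ℤ) :
    Nat.gcd (q - 1) ((z % ((q : ℤ) - 1)).toNat) = Int.gcd ((q : ℤ) - 1) z := by
  have hcast : ((q - 1 : ℕ) : ℤ) = (q : ℤ) - 1 := by push_cast; omega
  have hne : ((q : ℤ) - 1) ≠ 0 := by omega
  have hnonneg : 0 ≤ z % ((q : ℤ) - 1) := Int.emod_nonneg z hne
  have h1 : (((z % ((q : ℤ) - 1)).toNat : ℕ) : ℤ) = z % ((q : ℤ) - 1) :=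
    Int.toNat_of_nonneg hnonneg
  have h2 : ((q : ℤ) - 1) ∣ (((z % ((q : ℤ) - 1)).toNat : ℤ) - z) := by
    rw [h1, Int.emod_def]
    exact ⟨-(z / ((q : ℤ) - 1)), by ring⟩
  calc Nat.gcd (q - 1) ((z % ((q : ℤ) - 1)).toNat)
      = Int.gcd ((q - 1 : ℕ) : ℤ) (((z % ((q : ℤ) - 1)).toNat : ℕ) : ℤ) :=
        (Int.gcd_natCast_natCast _ _).symm
    _ = Int.gcd ((q : ℤ) - 1) ((z % ((q : ℤ) - 1)).toNat : ℤ) := by rw [hcast]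
    _ = Int.gcd ((q : ℤ) - 1) z := int_gcd_congr _ h2

lemma exists_perm_bound_ne (p q : ℕ) [Fact p.Prime] [Fact q.Prime]
    (hp3 : 3 ≤ p) (hq3 : 3 ≤ q) (hpq : p ≠ q) (e : ZMod p → ℤ) :
    ∃ π : Equiv.Perm (ZMod (p * q)), ∀ k : ZMod (p * q), ∃ x : ZMod p,
      cyc (π * Equiv.addRight k) ≤
        2 + Int.gcd ((q : ℤ) - 1) (e x) + Int.gcd ((q : ℤ) - 1) ((∑ y : ZMod p, e y) - e x) := by
  have hp : p.Prime := Fact.out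
  have hq : q.Prime := Fact.out
  have hq2 := hq.two_le
  have hco : Nat.Coprime p q := (Nat.coprime_primes hp hq).mpr hpq
  set E := ZMod.chineseRemainder hco with hE
  obtain ⟨h, hh⟩ := IsCyclic.exists_generator (α := (ZMod p)ˣ)
  obtain ⟨ζ, hζ⟩ := IsCyclic.exists_generator (α := (ZMod q)ˣ)
  set n : ZMod p → ℕ := fun y => ((e y) % ((q : ℤ) - 1)).toNat with hn
  set u : ZMod p → (ZMod q)ˣ := fun y => ζ ^ n y with hu
  refine ⟨permConjHom E.toEquiv.symm (skewPerm h u), ?_⟩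
  intro k
  have hconj : permConjHom E.toEquiv.symm (skewPerm h u) * Equiv.addRight k
      = permConjHom E.toEquiv.symm
          (skewPerm h u * Equiv.addRight ((((E k).1, (E k).2)) : ZMod p × ZMod q)) := by
    ext z
    simp only [Equiv.Perm.mul_apply, permConjHom_apply, Equiv.symm_symm]
    congr 1
    show skewPerm h u (E.toEquiv (z + k)) = skewPerm h u (E.toEquiv z + ((E k).1, (E k).2))
    congr 1
    rw [Prod.mk.eta]
    exact map_add E z k
  rw [hconj, cyc_permConj]
  obtain ⟨x, hx⟩ := skew_cyc_le hp3 h hh ζ hζ n (E k).1 (E k).2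
  refine ⟨x, ?_⟩
  have hcast : ((q - 1 : ℕ) : ℤ) = (q : ℤ) - 1 := by push_cast; omega
  have hg1 : Nat.gcd (q - 1) (n x) = Int.gcd ((q : ℤ) - 1) (e x) := gcd_toNat_mod q hq2 (e x)
  have hg2 : Nat.gcd (q - 1) (∑ y ∈ Finset.univ.erase x, n y)
      = Int.gcd ((q : ℤ) - 1) ((∑ y : ZMod p, e y) - e x) := by
    have hstep3 : ∑ y ∈ Finset.univ.erase x, e y = (∑ y : ZMod p, e y) - e x := by
      have := Finset.sum_erase_add Finset.univ e (Finset.mem_univ x)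
      linarith
    have hdvd : ((q : ℤ) - 1) ∣
        (((∑ y ∈ Finset.univ.erase x, n y : ℕ) : ℤ) - ∑ y ∈ Finset.univ.erase x, e y) := by
      push_cast
      rw [← Finset.sum_sub_distrib]
      refine Finset.dvd_sum ?_
      intro y hy
      have h1 : ((n y : ℕ) : ℤ) = e y % ((q : ℤ) - 1) := by
        rw [hn]
        exact Int.toNat_of_nonneg (Int.emod_nonneg _ (by omega))
      rw [h1, Int.emod_def]
      exact ⟨-(e y / ((q : ℤ) - 1)), by ring⟩
    calc Nat.gcd (q - 1) (∑ y ∈ Finset.univ.erase x, n y)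
        = Int.gcd ((q : ℤ) - 1) ((∑ y ∈ Finset.univ.erase x, n y : ℕ) : ℤ) := by
          rw [← hcast, Int.gcd_natCast_natCast]
      _ = Int.gcd ((q : ℤ) - 1) (∑ y ∈ Finset.univ.erase x, e y) := int_gcd_congr _ hdvd
      _ = Int.gcd ((q : ℤ) - 1) ((∑ y : ZMod p, e y) - e x) := by rw [hstep3]
  calc cyc (skewPerm h u * Equiv.addRight ((((E k).1, (E k).2)) : ZMod p × ZMod q))
      ≤ 2 + Nat.gcd (q - 1) (n x) + Nat.gcd (q - 1) (∑ y ∈ Finset.univ.erase x, n y) := hx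
    _ = 2 + Int.gcd ((q : ℤ) - 1) (e x) + Int.gcd ((q : ℤ) - 1) ((∑ y : ZMod p, e y) - e x) := by
        rw [hg1, hg2]

lemma one_add_pow_of_sq_zero {R : Type*} [CommRing R] (z : R) (hz : z * z = 0) (m : ℕ) :
    (1 + z) ^ m = 1 + (m : R) * z := by
  induction m with
  | zero => simp
  | succ m ih =>
    rw [pow_succ, ih]
    push_cast
    ring_nf
    linear_combination (m : R) * hz

lemma isUnit_of_cast_ne_zero (p : ℕ) (hp : p.Prime) (x : ZMod (p * p))
    (hx : (ZMod.castHom (dvd_mul_left p p) (ZMod p)) x ≠ 0) : IsUnit x := by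
  haveI : NeZero (p * p) := ⟨Nat.mul_ne_zero hp.pos.ne' hp.pos.ne'⟩
  have hval : ((x.val : ℕ) : ZMod (p * p)) = x := ZMod.natCast_rightInverse x
  have hnd : ¬ p ∣ x.val := by
    intro hdd
    apply hx
    have h2 : (ZMod.castHom (dvd_mul_left p p) (ZMod p)) x = ((x.val : ℕ) : ZMod p) := by
      conv_lhs => rw [← hval]
      rw [map_natCast]
    rw [h2]
    exact (ZMod.natCast_eq_zero_iff _ _).mpr hdd
  have h1 : Nat.Coprime p (x.val) := (Nat.Prime.coprime_iff_not_dvd hp).mpr hnd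
  have hco : Nat.Coprime (x.val) (p * p) := Nat.Coprime.mul_right h1.symm h1.symm
  rw [← hval]
  exact (ZMod.isUnit_iff_coprime _ _).mpr hco

lemma dvd_val_of_not_isUnit (p : ℕ) (hp : p.Prime) (x : ZMod (p * p))
    (hx : ¬ IsUnit x) : p ∣ x.val := by
  haveI : NeZero (p * p) := ⟨Nat.mul_ne_zero hp.pos.ne' hp.pos.ne'⟩
  by_contra hnd
  apply hx
  apply isUnit_of_cast_ne_zero p hp
  have hval : ((x.val : ℕ) : ZMod (p * p)) = x := ZMod.natCast_rightInverse x
  have h2 : (ZMod.castHom (dvd_mul_left p p) (ZMod p)) x = ((x.val : ℕ) : ZMod p) := by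
    conv_lhs => rw [← hval]
    rw [map_natCast]
  rw [h2]
  intro hc
  exact hnd ((ZMod.natCast_eq_zero_iff _ _).mp hc)

lemma exists_perm_bound_eq (p : ℕ) [Fact p.Prime] (hp3 : 3 ≤ p) :
    ∃ π : Equiv.Perm (ZMod (p * p)), ∀ k : ZMod (p * p), cyc (π * Equiv.addRight k) ≤ 3 := by
  have hp : p.Prime := Fact.out
  haveI : NeZero (p * p) := ⟨Nat.mul_ne_zero (by omega) (by omega)⟩
  obtain ⟨g₀, hg₀⟩ := IsCyclic.exists_generator (α := (ZMod p)ˣ)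
  have hdvd : p ∣ p * p := dvd_mul_left p p
  obtain ⟨g, hg⟩ := ZMod.unitsMap_surjective hdvd g₀
  have hpsq : ((p : ZMod (p * p)) * (p : ZMod (p * p))) = 0 := by
    have h0 : ((p * p : ℕ) : ZMod (p * p)) = 0 := ZMod.natCast_self _
    push_cast at h0
    exact h0
  set υ : (ZMod (p * p))ˣ :=
    ⟨1 + (p : ZMod (p * p)), 1 - (p : ZMod (p * p)),
      by linear_combination -hpsq, by linear_combination -hpsq⟩ with hυdef
  have hυpow : ((υ : (ZMod (p * p))ˣ) : ZMod (p * p)) ^ (p - 1)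
      = 1 + ((p - 1 : ℕ) : ZMod (p * p)) * (p : ZMod (p * p)) := by
    rw [hυdef]
    exact one_add_pow_of_sq_zero _ hpsq (p - 1)
  have hυne : (υ : (ZMod (p * p))ˣ) ^ (p - 1) ≠ 1 := by
    intro hc
    have h1 : ((υ : (ZMod (p * p))ˣ) : ZMod (p * p)) ^ (p - 1) = 1 := by
      rw [← Units.val_pow_eq_pow_val, hc, Units.val_one]
    rw [hυpow] at h1
    have h2 : (((p - 1) * p : ℕ) : ZMod (p * p)) = 0 := by
      push_cast
      linear_combination h1
    have h3 : (p * p) ∣ (p - 1) * p := (ZMod.natCast_eq_zero_iff _ _).mp h2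
    have h4 : p * p ≤ (p - 1) * p :=
      Nat.le_of_dvd (Nat.mul_pos (by omega) (by omega)) h3
    have h5 : (p - 1) * p < p * p :=
      (Nat.mul_lt_mul_right (show 0 < p by omega)).mpr (by omega)
    omega
  have humap : ZMod.unitsMap hdvd υ = 1 := by
    refine Units.ext ?_
    rw [ZMod.unitsMap_def]
    show (ZMod.castHom hdvd (ZMod p)) ((υ : (ZMod (p * p))ˣ) : ZMod (p * p)) = 1
    rw [hυdef]
    show (ZMod.castHom hdvd (ZMod p)) (1 + (p : ZMod (p * p))) = 1
    rw [map_add, map_one, map_natCast, ZMod.natCast_self, add_zero]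
  set h : (ZMod (p * p))ˣ := if g ^ (p - 1) = 1 then g * υ else g with hhdef
  have hmap : ZMod.unitsMap hdvd h = g₀ := by
    rw [hhdef]
    split_ifs with hcase
    · rw [map_mul, hg, humap, mul_one]
    · exact hg
  have hne2 : h ^ (p - 1) ≠ 1 := by
    rw [hhdef]
    split_ifs with hcase
    · rw [mul_pow, hcase, one_mul]
      exact hυne
    · exact hcase
  have hcardpp : Fintype.card (ZMod (p * p))ˣ = p * (p - 1) := by
    rw [ZMod.card_units_eq_totient]
    have h5 : p * p = p ^ 2 := by ring
    rw [h5, Nat.totient_prime_pow hp (by norm_num)]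
    ring_nf
  have hordg₀ : orderOf g₀ = p - 1 := by
    rw [orderOf_eq_card_of_forall_mem_zpowers hg₀, Nat.card_eq_fintype_card, ZMod.card_units p]
  have hdvd1 : (p - 1) ∣ orderOf h := by
    rw [← hordg₀, ← hmap]
    exact orderOf_map_dvd _ _
  have hdvd2 : orderOf h ∣ p * (p - 1) := by
    rw [← hcardpp]
    exact orderOf_dvd_card
  obtain ⟨m, hm⟩ := hdvd1
  have hmp : m ∣ p := by
    have h6 : (p - 1) * m ∣ (p - 1) * p := by
      rw [← hm]
      calc orderOf h ∣ p * (p - 1) := hdvd2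
        _ = (p - 1) * p := by ring
    exact (Nat.mul_dvd_mul_iff_left (by omega : 0 < p - 1)).mp h6
  have hordh : orderOf h = (p - 1) * p := by
    rcases (Nat.Prime.eq_one_or_self_of_dvd hp m hmp) with h7 | h7
    · exfalso
      rw [h7, mul_one] at hm
      exact hne2 (hm ▸ pow_orderOf_eq_one h)
    · rw [hm, h7]
  have hh : ∀ v : (ZMod (p * p))ˣ, v ∈ Subgroup.zpowers h := by
    have hcard : Nat.card (Subgroup.zpowers h) = Nat.card (ZMod (p * p))ˣ := by
      rw [Nat.card_zpowers, hordh, Nat.card_eq_fintype_card, hcardpp]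
      ring
    have htop := Subgroup.eq_top_of_card_eq _ hcard
    intro v
    rw [htop]
    exact Subgroup.mem_top v
  -- covering argument
  have hcast_h : (ZMod.castHom hdvd (ZMod p)) ((h : (ZMod (p * p))ˣ) : ZMod (p * p))
      = (g₀ : ZMod p) := by
    have h3 := congrArg Units.val hmap
    simpa [ZMod.unitsMap_def] using h3
  have hg₀1 : (g₀ : ZMod p) ≠ 1 := by
    intro hc
    have h4 : g₀ = 1 := Units.ext hc
    rw [h4, orderOf_one] at hordg₀
    omega
  have hunit1h : IsUnit (1 - ((h : (ZMod (p * p))ˣ) : ZMod (p * p))) := by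
    apply isUnit_of_cast_ne_zero p hp
    rw [map_sub, map_one, hcast_h]
    intro hc
    apply hg₀1
    linear_combination -hc
  refine ⟨mulPerm h, ?_⟩
  intro k
  have hσrw : mulPerm h * Equiv.addRight k = affPerm h k := rfl
  rw [hσrw]
  obtain ⟨w₀, hw₀⟩ := hunit1h
  set z₀ : ZMod (p * p) := ((w₀⁻¹ : (ZMod (p * p))ˣ) : ZMod (p * p)) * (↑h * k) with hz₀
  have hfix : (1 - (↑h : ZMod (p * p))) * z₀ = ↑h * k := by
    rw [hz₀, ← hw₀, ← mul_assoc, ← Units.val_mul, mul_inv_cancel, Units.val_one, one_mul]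
  have hkey : ∀ w, affPerm h k (z₀ + w) = z₀ + ↑h * w := by
    intro w; rw [affPerm_apply]; linear_combination -hfix
  have hkeyz : ∀ (i : ℤ) (w : ZMod (p * p)),
      ((affPerm h k) ^ i) (z₀ + w) = z₀ + ((h ^ i : (ZMod (p * p))ˣ) : ZMod (p * p)) * w := by
    intro i w
    have h0 : ∀ w, affPerm h k ((fun w => z₀ + w) w) = (fun w => z₀ + w) (mulPerm h w) := by
      intro w; simpa [mulPerm_apply] using hkey w
    have h2 := semiconj_zpow_apply (affPerm h k) (mulPerm h) (fun w => z₀ + w) h0 i w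
    rw [mulPerm_zpow] at h2
    rw [h2, mulPerm_apply]
  set R : Finset (ZMod (p * p)) := {z₀, z₀ + 1, z₀ + (p : ZMod (p * p))} with hR
  have hcov : ∀ z, ∃ r ∈ R, (affPerm h k).SameCycle r z := by
    intro z
    by_cases h1 : z - z₀ = 0
    · have hz : z = z₀ := by linear_combination h1
      exact ⟨z₀, by simp [hR], 0, by simpa using hz.symm⟩
    by_cases h2 : IsUnit (z - z₀)
    · obtain ⟨vu, hvu⟩ := h2
      obtain ⟨i, hi⟩ := Subgroup.mem_zpowers_iff.mp (hh vu)
      refine ⟨z₀ + 1, by simp [hR], i, ?_⟩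
      rw [hkeyz i 1, mul_one, hi, hvu]
      ring
    · have hpv : p ∣ (z - z₀).val := dvd_val_of_not_isUnit p hp _ h2
      obtain ⟨M, hM⟩ := hpv
      have hvval : (((z - z₀).val : ℕ) : ZMod (p * p)) = z - z₀ := ZMod.natCast_rightInverse _
      have hMne : ((M : ℕ) : ZMod p) ≠ 0 := by
        intro hc
        obtain ⟨t, ht⟩ := (ZMod.natCast_eq_zero_iff _ _).mp hc
        apply h1
        rw [← hvval, hM, ht]
        push_cast
        rw [show ((p : ZMod (p * p)) * ((p : ZMod (p * p)) * (t : ZMod (p * p))))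
            = ((p : ZMod (p * p)) * (p : ZMod (p * p))) * (t : ZMod (p * p)) by ring,
          hpsq, zero_mul]
      obtain ⟨Mu, hMu⟩ := isUnit_iff_ne_zero.mpr hMne
      obtain ⟨i, hi⟩ := Subgroup.mem_zpowers_iff.mp (hg₀ Mu)
      have hD : (ZMod.castHom hdvd (ZMod p))
          (((h ^ i : (ZMod (p * p))ˣ) : ZMod (p * p)) - ((M : ℕ) : ZMod (p * p))) = 0 := by
        rw [map_sub, map_natCast]
        have hcast_hi : (ZMod.castHom hdvd (ZMod p)) ((h ^ i : (ZMod (p * p))ˣ) : ZMod (p * p))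
            = ((g₀ ^ i : (ZMod p)ˣ) : ZMod p) := by
          have h3 : ZMod.unitsMap hdvd (h ^ i) = g₀ ^ i := by rw [map_zpow, hmap]
          exact congrArg Units.val h3
        rw [hcast_hi, hi]
        rw [hMu]
        exact sub_self _
      have hpD : (p : ZMod (p * p)) *
          (((h ^ i : (ZMod (p * p))ˣ) : ZMod (p * p)) - ((M : ℕ) : ZMod (p * p))) = 0 := by
        set D := ((h ^ i : (ZMod (p * p))ˣ) : ZMod (p * p)) - ((M : ℕ) : ZMod (p * p)) with hDdef
        have hDval : ((D.val : ℕ) : ZMod (p * p)) = D := ZMod.natCast_rightInverse _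
        have hcD : (ZMod.castHom hdvd (ZMod p)) D = ((D.val : ℕ) : ZMod p) := by
          conv_lhs => rw [← hDval]
          rw [map_natCast]
        rw [hcD] at hD
        obtain ⟨t, ht⟩ := (ZMod.natCast_eq_zero_iff _ _).mp hD
        rw [← hDval, ht]
        push_cast
        rw [← mul_assoc, hpsq, zero_mul]
      refine ⟨z₀ + (p : ZMod (p * p)), by simp [hR], i, ?_⟩
      rw [hkeyz i _]
      have h9 : ((h ^ i : (ZMod (p * p))ˣ) : ZMod (p * p)) * (p : ZMod (p * p)) = z - z₀ := by
        have h8 : ((h ^ i : (ZMod (p * p))ˣ) : ZMod (p * p)) * (p : ZMod (p * p))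
            = ((M : ℕ) : ZMod (p * p)) * (p : ZMod (p * p)) := by
          linear_combination hpD
        rw [h8, ← hvval, hM]
        push_cast
        ring
      rw [h9]
      ring
  have hcard : R.card ≤ 3 := by
    rw [hR]
    apply (Finset.card_insert_le _ _).trans
    have h10 := Finset.card_insert_le (z₀ + 1) ({z₀ + (p : ZMod (p * p))} : Finset (ZMod (p * p)))
    simp only [Finset.card_singleton] at h10
    omega
  calc cyc (affPerm h k) ≤ R.card := cyc_le_card_of_cover _ R hcov
    _ ≤ 3 := hcard


theorem tCirc_pq_ge_sub_max (p q : ℕ) [Fact p.Prime] [Fact q.Prime]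
    (hp3 : 3 ≤ p) (hq3 : 3 ≤ q) (e : ZMod p → ℤ) :
    p * q -
        sSup { m : ℕ | ∃ x : ZMod p,
          m = 2 + Int.gcd ((q : ℤ) - 1) (e x) +
              Int.gcd ((q : ℤ) - 1) ((∑ y : ZMod p, e y) - e x) }
      ≤ tCirc (p * q) := by
  have hp : p.Prime := Fact.out
  have hq : q.Prime := Fact.out
  have hgcdle : ∀ z : ℤ, Int.gcd ((q : ℤ) - 1) z ≤ q - 1 := by
    intro z
    have h1 : Int.gcd ((q : ℤ) - 1) z = Nat.gcd (((q : ℤ) - 1).natAbs) z.natAbs := rfl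
    have h2 : ((q : ℤ) - 1).natAbs = q - 1 := by omega
    rw [h1, h2]
    exact Nat.gcd_le_left _ (by omega)
  have hgcdpos : ∀ z : ℤ, 1 ≤ Int.gcd ((q : ℤ) - 1) z := by
    intro z
    rcases Nat.eq_zero_or_pos (Int.gcd ((q : ℤ) - 1) z) with h1 | h1
    · exfalso
      have h2 := (Int.gcd_eq_zero_iff).mp h1
      omega
    · omega
  have hbddS : BddAbove { m : ℕ | ∃ x : ZMod p,
      m = 2 + Int.gcd ((q : ℤ) - 1) (e x) +
          Int.gcd ((q : ℤ) - 1) ((∑ y : ZMod p, e y) - e x) } := by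
    refine ⟨2 + (q - 1) + (q - 1), ?_⟩
    rintro m ⟨x, rfl⟩
    have := hgcdle (e x)
    have := hgcdle ((∑ y : ZMod p, e y) - e x)
    omega
  obtain ⟨π, hπ⟩ : ∃ π : Equiv.Perm (ZMod (p * q)), ∀ k : ZMod (p * q),
      cyc (π * Equiv.addRight k) ≤ sSup { m : ℕ | ∃ x : ZMod p,
        m = 2 + Int.gcd ((q : ℤ) - 1) (e x) +
            Int.gcd ((q : ℤ) - 1) ((∑ y : ZMod p, e y) - e x) } := by
    by_cases hpq : p = q
    · subst hpq
      obtain ⟨π, hπ3⟩ := exists_perm_bound_eq p hp3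
      refine ⟨π, fun k => (hπ3 k).trans ?_⟩
      have hmem : 2 + Int.gcd ((p : ℤ) - 1) (e 0) +
          Int.gcd ((p : ℤ) - 1) ((∑ y : ZMod p, e y) - e 0) ∈
          { m : ℕ | ∃ x : ZMod p,
            m = 2 + Int.gcd ((p : ℤ) - 1) (e x) +
                Int.gcd ((p : ℤ) - 1) ((∑ y : ZMod p, e y) - e x) } := ⟨0, rfl⟩
      have h4 := le_csSup hbddS hmem
      have h5 := hgcdpos (e 0)
      have h6 := hgcdpos ((∑ y : ZMod p, e y) - e 0)
      omega
    · obtain ⟨π, hπk⟩ := exists_perm_bound_ne p q hp3 hq3 hpq e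
      refine ⟨π, fun k => ?_⟩
      obtain ⟨x, hx⟩ := hπk k
      exact hx.trans (le_csSup hbddS ⟨x, rfl⟩)
  have h2 : p * q - sSup { m : ℕ | ∃ x : ZMod p,
      m = 2 + Int.gcd ((q : ℤ) - 1) (e x) +
          Int.gcd ((q : ℤ) - 1) ((∑ y : ZMod p, e y) - e x) } ≤ tCoset π := by
    refine le_csInf ⟨tPerm (π * Equiv.addRight 0), 0, rfl⟩ ?_
    rintro m ⟨k, rfl⟩
    exact Nat.sub_le_sub_left (hπ k) _
  have h3 : tCoset π ≤ tCirc (p * q) := by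
    refine le_csSup ?_ ⟨π, rfl⟩
    refine ⟨p * q, ?_⟩
    rintro m ⟨π', rfl⟩
    have h4 : tCoset π' ≤ tPerm (π' * Equiv.addRight 0) := Nat.sInf_le ⟨0, rfl⟩
    exact h4.trans (Nat.sub_le _ _)
  exact h2.trans h3
end
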